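/- Let m ≥ n, let A ∈ ℝ^{m×n} have full rank n with columns a_j, and let γ ≥ 0. Suppose A + ΔA = Q R̂, where Q ∈ ℝ^{m×m} is orthogonal, R̂ ∈ ℝ^{m×n}, and ‖ΔA e_j‖₂ ≤ γ‖A e_j‖₂ for every column index j (e_j being the j-th standard basis vector). Then for every k with 1 ≤ k ≤ n, |σ_k(A) − σ_k(R̂)| ≤ √n·γ·κ₂ᴰ(A)·σ_k(A). -/

import Mathlib

open scoped BigOperators
open Matrix

/-- Euclidean norm of a vector in `ℝ^m`. -/
noncomputable def vecNorm {m : ℕ} (v : Fin m → ℝ) : ℝ :=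
  Real.sqrt (∑ i, v i ^ 2)

/-- The `k`-th largest singular value of a real `m × n` matrix
(`k = 0` gives the largest). -/
noncomputable def sval {m n : ℕ} (A : Matrix (Fin m) (Fin n) ℝ) (k : Fin n) : ℝ :=
  Real.sqrt
    (((Matrix.isHermitian_conjTranspose_mul_self A).eigenvalues ∘
      Tuple.sort (Matrix.isHermitian_conjTranspose_mul_self A).eigenvalues) k.rev)

/-- Spectral norm: the largest singular value. -/
noncomputable def specNorm {m n : ℕ} (A : Matrix (Fin m) (Fin n) ℝ) : ℝ :=
  ⨆ k, sval A k

/-- Smallest singular value. -/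
noncomputable def sMin {m n : ℕ} (A : Matrix (Fin m) (Fin n) ℝ) : ℝ :=
  ⨅ k, sval A k

/-- Frobenius norm. -/
noncomputable def frobNorm {m n : ℕ} (A : Matrix (Fin m) (Fin n) ℝ) : ℝ :=
  Real.sqrt (∑ i, ∑ j, (A i j) ^ 2)

/-- Frobenius norm of the off-diagonal part of a square matrix. -/
noncomputable def offF {n : ℕ} (M : Matrix (Fin n) (Fin n) ℝ) : ℝ :=
  frobNorm (M - Matrix.diagonal (fun i => M i i))

/-- Diagonal matrix of inverse column norms `D(A)`. -/
noncomputable def colScale {m n : ℕ} (A : Matrix (Fin m) (Fin n) ℝ) :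
    Matrix (Fin n) (Fin n) ℝ :=
  Matrix.diagonal (fun j => (vecNorm (fun i => A i j))⁻¹)

/-- Condition number `κ₂(A) = σ_max(A) / σ_min(A)`. -/
noncomputable def kappa2 {m n : ℕ} (A : Matrix (Fin m) (Fin n) ℝ) : ℝ :=
  specNorm A / sMin A

/-- One-sided scaled condition number `κ₂ᴰ(A) = κ₂(A · D(A))`. -/
noncomputable def scaledCond {m n : ℕ} (A : Matrix (Fin m) (Fin n) ℝ) : ℝ :=
  kappa2 (A * colScale A)

/-- Entrywise absolute value of a matrix. -/
def matAbs {m n : ℕ} (A : Matrix (Fin m) (Fin n) ℝ) : Matrix (Fin m) (Fin n) ℝ :=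
  fun i j => |A i j|

section Aux
variable {n : ℕ}


lemma dot_eq_inner (x y : EuclideanSpace ℝ (Fin n)) :
    (x : Fin n → ℝ) ⬝ᵥ (y : Fin n → ℝ) = @inner ℝ _ _ x y := by
  simp [EuclideanSpace.inner_eq_star_dotProduct]; exact dotProduct_comm _ _

lemma dot_sum (x : Fin n → ℝ) (g : Fin n → (Fin n → ℝ)) :
    x ⬝ᵥ (∑ i, g i) = ∑ i, x ⬝ᵥ g i := by
  simp only [dotProduct, Finset.sum_apply, Finset.mul_sum]
  exact Finset.sum_comm

lemma quad_expand {M : Matrix (Fin n) (Fin n) ℝ} (hM : M.IsHermitian)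
    (x : EuclideanSpace ℝ (Fin n)) :
    (x : Fin n → ℝ) ⬝ᵥ (M *ᵥ x) =
      ∑ i, hM.eigenvalues i * (hM.eigenvectorBasis.repr x i)^2 := by
  have hx : (x : Fin n → ℝ) = ∑ i, hM.eigenvectorBasis.repr x i • (hM.eigenvectorBasis i : Fin n → ℝ) := by
    have h2 := congrArg (fun z : EuclideanSpace ℝ (Fin n) => (z : Fin n → ℝ)) (hM.eigenvectorBasis.sum_repr x)
    simpa using h2.symm
  have hMx : M *ᵥ (x : Fin n → ℝ) = ∑ i, (hM.eigenvectorBasis.repr x i * hM.eigenvalues i) • (hM.eigenvectorBasis i : Fin n → ℝ) := by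
    conv_lhs => rw [hx]
    rw [show M *ᵥ (∑ i, hM.eigenvectorBasis.repr x i • (hM.eigenvectorBasis i : Fin n → ℝ))
        = ∑ i, hM.eigenvectorBasis.repr x i • (M *ᵥ (hM.eigenvectorBasis i : Fin n → ℝ)) from
      by rw [← Matrix.mulVecLin_apply, map_sum]; simp [Matrix.mulVec_smul]]
    refine Finset.sum_congr rfl fun i _ => ?_
    rw [show M *ᵥ (hM.eigenvectorBasis i : Fin n → ℝ) = hM.eigenvalues i • (hM.eigenvectorBasis i : Fin n → ℝ) from hM.mulVec_eigenvectorBasis i, smul_smul]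
  rw [hMx, dot_sum]
  refine Finset.sum_congr rfl fun i _ => ?_
  rw [dotProduct_smul]
  have : (x : Fin n → ℝ) ⬝ᵥ (hM.eigenvectorBasis i : Fin n → ℝ) = hM.eigenvectorBasis.repr x i := by
    rw [dot_eq_inner, real_inner_comm, ← hM.eigenvectorBasis.repr_apply_apply x i]
  rw [this, smul_eq_mul]; ring

lemma norm_sq_expand (b : OrthonormalBasis (Fin n) ℝ (EuclideanSpace ℝ (Fin n)))
    (x : EuclideanSpace ℝ (Fin n)) :
    ∑ i, (x : Fin n → ℝ) i ^ 2 = ∑ i, (b.repr x i)^2 := by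
  have h1 : ‖x‖^2 = ∑ i, (x : Fin n → ℝ) i ^ 2 := by
    rw [EuclideanSpace.norm_eq, Real.sq_sqrt (by positivity)]
    simp [sq_abs]
  have h2 : ‖b.repr x‖^2 = ∑ i, (b.repr x i)^2 := by
    rw [EuclideanSpace.norm_eq, Real.sq_sqrt (by positivity)]
    simp [sq_abs]
  rw [← h1, ← h2, b.repr.norm_map]

lemma repr_vanish (b : OrthonormalBasis (Fin n) ℝ (EuclideanSpace ℝ (Fin n)))
    (s : Finset (Fin n)) (x : EuclideanSpace ℝ (Fin n))
    (hx : x ∈ Submodule.span ℝ (b '' (s : Set (Fin n)))) {i : Fin n} (hi : i ∉ s) :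
    b.repr x i = 0 := by
  have : Submodule.span ℝ (b '' (s : Set (Fin n))) ≤
      LinearMap.ker ((EuclideanSpace.projₗ i : (EuclideanSpace ℝ (Fin n)) →ₗ[ℝ] ℝ) ∘ₗ
        b.repr.toLinearEquiv.toLinearMap) := by
    rw [Submodule.span_le]
    rintro y ⟨j, hj, rfl⟩
    have hij : i ≠ j := fun h => hi (h ▸ hj)
    simp only [SetLike.mem_coe, LinearMap.mem_ker, LinearMap.comp_apply, LinearMap.proj_apply]
    show b.repr (b j) i = 0
    rw [b.repr_self, EuclideanSpace.single_apply, if_neg hij]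
  exact this hx

lemma quad_le_of_mem_span {M : Matrix (Fin n) (Fin n) ℝ} (hM : M.IsHermitian)
    (s : Finset (Fin n)) (t : ℝ) (hs : ∀ i ∈ s, hM.eigenvalues i ≤ t)
    (x : EuclideanSpace ℝ (Fin n))
    (hx : x ∈ Submodule.span ℝ (hM.eigenvectorBasis '' (s : Set (Fin n)))) :
    (x : Fin n → ℝ) ⬝ᵥ (M *ᵥ x) ≤ t * ∑ i, (x : Fin n → ℝ) i ^ 2 := by
  rw [quad_expand hM x, norm_sq_expand hM.eigenvectorBasis x, Finset.mul_sum]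
  refine Finset.sum_le_sum fun i _ => ?_
  by_cases his : i ∈ s
  · exact mul_le_mul_of_nonneg_right (hs i his) (sq_nonneg _)
  · rw [repr_vanish hM.eigenvectorBasis s x hx his]
    simp

lemma quad_ge_of_mem_span {M : Matrix (Fin n) (Fin n) ℝ} (hM : M.IsHermitian)
    (s : Finset (Fin n)) (t : ℝ) (hs : ∀ i ∈ s, t ≤ hM.eigenvalues i)
    (x : EuclideanSpace ℝ (Fin n))
    (hx : x ∈ Submodule.span ℝ (hM.eigenvectorBasis '' (s : Set (Fin n)))) :
    t * ∑ i, (x : Fin n → ℝ) i ^ 2 ≤ (x : Fin n → ℝ) ⬝ᵥ (M *ᵥ x) := by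
  rw [quad_expand hM x, norm_sq_expand hM.eigenvectorBasis x, Finset.mul_sum]
  refine Finset.sum_le_sum fun i _ => ?_
  by_cases his : i ∈ s
  · exact mul_le_mul_of_nonneg_right (hs i his) (sq_nonneg _)
  · rw [repr_vanish hM.eigenvectorBasis s x hx his]
    simp

lemma finrank_span_orthonormal (b : OrthonormalBasis (Fin n) ℝ (EuclideanSpace ℝ (Fin n)))
    (w : Finset (Fin n)) :
    Module.finrank ℝ (Submodule.span ℝ (b '' (w : Set (Fin n)))) = w.card := by
  have hli : LinearIndependent ℝ (fun i : (w : Set (Fin n)) => b i) :=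
    b.orthonormal.linearIndependent.comp Subtype.val Subtype.val_injective
  have himg : Set.range (fun i : (w : Set (Fin n)) => b i) = b '' (w : Set (Fin n)) := by
    ext y; simp [Set.range, Set.mem_image]
  rw [← himg, finrank_span_eq_card hli]
  simp

lemma eig_sorted_mono {M N : Matrix (Fin n) (Fin n) ℝ} (hM : M.IsHermitian) (hN : N.IsHermitian)
    (c : ℝ) (hc : 0 ≤ c)
    (h : ∀ x : Fin n → ℝ, x ⬝ᵥ (N *ᵥ x) ≤ c * (x ⬝ᵥ (M *ᵥ x))) (j : Fin n) :
    (hN.eigenvalues ∘ Tuple.sort hN.eigenvalues) j ≤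
      c * (hM.eigenvalues ∘ Tuple.sort hM.eigenvalues) j := by
  set σ := Tuple.sort hN.eigenvalues with hσ
  set τ := Tuple.sort hM.eigenvalues with hτ
  have hmonoN : Monotone (hN.eigenvalues ∘ σ) := Tuple.monotone_sort _
  have hmonoM : Monotone (hM.eigenvalues ∘ τ) := Tuple.monotone_sort _
  set sN : Finset (Fin n) := (Finset.Ici j).image σ with hsN
  set sM : Finset (Fin n) := (Finset.Iic j).image τ with hsM
  set S := Submodule.span ℝ (hN.eigenvectorBasis '' (sN : Set (Fin n))) with hS
  set T := Submodule.span ℝ (hM.eigenvectorBasis '' (sM : Set (Fin n))) with hT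
  have hcardN : sN.card = n - j := by
    rw [hsN, Finset.card_image_of_injective _ σ.injective, Fin.card_Ici]
  have hcardM : sM.card = j + 1 := by
    rw [hsM, Finset.card_image_of_injective _ τ.injective, Fin.card_Iic]
  have hrS : Module.finrank ℝ S = n - j := by rw [hS, finrank_span_orthonormal, hcardN]
  have hrT : Module.finrank ℝ T = j + 1 := by rw [hT, finrank_span_orthonormal, hcardM]
  have hsum : Module.finrank ℝ (S ⊔ T : Submodule ℝ (EuclideanSpace ℝ (Fin n)))
      + Module.finrank ℝ (S ⊓ T : Submodule ℝ (EuclideanSpace ℝ (Fin n)))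
      = (n - j) + (j + 1) := by
    rw [← hrS, ← hrT]; exact Submodule.finrank_sup_add_finrank_inf_eq S T
  have hle : Module.finrank ℝ (S ⊔ T : Submodule ℝ (EuclideanSpace ℝ (Fin n))) ≤ n := by
    simpa [finrank_euclideanSpace] using Submodule.finrank_le (S ⊔ T)
  have hpos : 0 < Module.finrank ℝ (S ⊓ T : Submodule ℝ (EuclideanSpace ℝ (Fin n))) := by
    have hj := j.isLt; omega
  have hne : (S ⊓ T) ≠ ⊥ := by
    intro hbot
    rw [hbot] at hpos
    simp at hpos
  obtain ⟨x, hxm, hx0⟩ := Submodule.exists_mem_ne_zero_of_ne_bot hne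
  have hxS : x ∈ S := hxm.1
  have hxT : x ∈ T := hxm.2
  have hp : 0 < ∑ i, (x : Fin n → ℝ) i ^ 2 := by
    by_contra hcon
    push_neg at hcon
    have hz : ∑ i, (x : Fin n → ℝ) i ^ 2 = 0 := le_antisymm hcon (by positivity)
    apply hx0
    ext i
    have := (Finset.sum_eq_zero_iff_of_nonneg (fun i _ => sq_nonneg _)).mp hz i (Finset.mem_univ i)
    exact pow_eq_zero_iff (two_ne_zero) |>.mp this
  have h1 : (hN.eigenvalues ∘ σ) j * ∑ i, (x : Fin n → ℝ) i ^ 2 ≤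
      (x : Fin n → ℝ) ⬝ᵥ (N *ᵥ x) := by
    refine quad_ge_of_mem_span hN sN _ ?_ x hxS
    rintro i hi
    rw [hsN, Finset.mem_image] at hi
    obtain ⟨l, hl, rfl⟩ := hi
    exact hmonoN (Finset.mem_Ici.mp hl)
  have h2 : (x : Fin n → ℝ) ⬝ᵥ (M *ᵥ x) ≤ (hM.eigenvalues ∘ τ) j * ∑ i, (x : Fin n → ℝ) i ^ 2 := by
    refine quad_le_of_mem_span hM sM _ ?_ x hxT
    rintro i hi
    rw [hsM, Finset.mem_image] at hi
    obtain ⟨l, hl, rfl⟩ := hi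
    exact hmonoM (Finset.mem_Iic.mp hl)
  have := le_trans h1 (le_trans (h x) (by
    calc c * ((x : Fin n → ℝ) ⬝ᵥ (M *ᵥ x)) ≤ c * ((hM.eigenvalues ∘ τ) j * ∑ i, (x : Fin n → ℝ) i ^ 2) :=
      mul_le_mul_of_nonneg_left h2 hc
    _ = (c * (hM.eigenvalues ∘ τ) j) * ∑ i, (x : Fin n → ℝ) i ^ 2 := by ring))
  exact le_of_mul_le_mul_right (by simpa [mul_comm] using this) hp



lemma dot_self_tmul {m : ℕ} (B : Matrix (Fin m) (Fin n) ℝ) (x : Fin n → ℝ) :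
    x ⬝ᵥ ((Bᴴ * B) *ᵥ x) = ∑ i, (B *ᵥ x) i ^ 2 := by
  have hBt : Bᴴ = Bᵀ := by ext i j; simp [Matrix.conjTranspose_apply]
  rw [hBt, ← Matrix.mulVec_mulVec, Matrix.dotProduct_mulVec, Matrix.vecMul_transpose]
  simp [dotProduct, sq]

lemma quad_eigvec {M : Matrix (Fin n) (Fin n) ℝ} (hM : M.IsHermitian) (i : Fin n) :
    ((hM.eigenvectorBasis i : Fin n → ℝ)) ⬝ᵥ (M *ᵥ (hM.eigenvectorBasis i : Fin n → ℝ))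
      = hM.eigenvalues i := by
  rw [quad_expand hM (hM.eigenvectorBasis i)]
  have : ∀ j, hM.eigenvectorBasis.repr (hM.eigenvectorBasis i) j = if j = i then 1 else 0 := by
    intro j
    rw [hM.eigenvectorBasis.repr_self, EuclideanSpace.single_apply]
  simp [this]

lemma eig_tmul_nonneg {m : ℕ} (B : Matrix (Fin m) (Fin n) ℝ) (i : Fin n) :
    0 ≤ (Matrix.isHermitian_conjTranspose_mul_self B).eigenvalues i := by
  rw [← quad_eigvec (Matrix.isHermitian_conjTranspose_mul_self B) i, dot_self_tmul]
  positivity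

lemma sval_exists_index {m : ℕ} (B : Matrix (Fin m) (Fin n) ℝ) (i : Fin n) :
    ∃ k : Fin n, sval B k =
      Real.sqrt ((Matrix.isHermitian_conjTranspose_mul_self B).eigenvalues i) := by
  refine ⟨((Tuple.sort (Matrix.isHermitian_conjTranspose_mul_self B).eigenvalues).symm i).rev, ?_⟩
  simp [sval]

lemma sval_nonneg {m : ℕ} (B : Matrix (Fin m) (Fin n) ℝ) (k : Fin n) : 0 ≤ sval B k :=
  Real.sqrt_nonneg _

lemma sval_mono {m : ℕ} (B C : Matrix (Fin m) (Fin n) ℝ) (c : ℝ) (hc : 0 ≤ c)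
    (h : ∀ x : Fin n → ℝ, (∑ i, (C *ᵥ x) i ^ 2) ≤ c * ∑ i, (B *ᵥ x) i ^ 2) (k : Fin n) :
    sval C k ≤ Real.sqrt c * sval B k := by
  have key := eig_sorted_mono (Matrix.isHermitian_conjTranspose_mul_self B)
    (Matrix.isHermitian_conjTranspose_mul_self C) c hc
    (fun x => by rw [dot_self_tmul, dot_self_tmul]; exact h x) k.rev
  rw [sval, sval, ← Real.sqrt_mul hc]
  exact Real.sqrt_le_sqrt key



variable {m : ℕ}

lemma sval_bddBelow (B : Matrix (Fin m) (Fin n) ℝ) : BddBelow (Set.range (sval B)) :=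
  ⟨0, by rintro y ⟨k, rfl⟩; exact sval_nonneg B k⟩

lemma sMin_nonneg [Nonempty (Fin n)] (B : Matrix (Fin m) (Fin n) ℝ) : 0 ≤ sMin B :=
  le_ciInf fun k => sval_nonneg B k

lemma sMin_le_sqrt_eig (B : Matrix (Fin m) (Fin n) ℝ) (i : Fin n) :
    sMin B ≤ Real.sqrt ((Matrix.isHermitian_conjTranspose_mul_self B).eigenvalues i) := by
  obtain ⟨k, hk⟩ := sval_exists_index B i
  rw [← hk]
  exact ciInf_le (sval_bddBelow B) k

lemma specNorm_ge (B : Matrix (Fin m) (Fin n) ℝ) (k : Fin n) : sval B k ≤ specNorm B :=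
  le_ciSup (Set.Finite.bddAbove (Set.finite_range _)) k

lemma span_univ_eigen {M : Matrix (Fin n) (Fin n) ℝ} (hM : M.IsHermitian) :
    Submodule.span ℝ (hM.eigenvectorBasis '' ((Finset.univ : Finset (Fin n)) : Set (Fin n))) = ⊤ := by
  rw [Finset.coe_univ, Set.image_univ, ← hM.eigenvectorBasis.coe_toBasis,
    Module.Basis.span_eq]

lemma lower_rayleigh [Nonempty (Fin n)] (B : Matrix (Fin m) (Fin n) ℝ) (y : Fin n → ℝ) :
    (sMin B)^2 * ∑ i, y i ^ 2 ≤ ∑ i, (B *ᵥ y) i ^ 2 := by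
  obtain ⟨i0, -, hmin⟩ := Finset.exists_min_image Finset.univ
    (Matrix.isHermitian_conjTranspose_mul_self B).eigenvalues Finset.univ_nonempty
  have h1 := quad_ge_of_mem_span (Matrix.isHermitian_conjTranspose_mul_self B) Finset.univ
    ((Matrix.isHermitian_conjTranspose_mul_self B).eigenvalues i0)
    (fun i _ => hmin i (Finset.mem_univ i)) (WithLp.toLp 2 y)
    (by rw [span_univ_eigen]; trivial)
  rw [dot_self_tmul] at h1
  refine le_trans ?_ h1
  have hs : (sMin B)^2 ≤ (Matrix.isHermitian_conjTranspose_mul_self B).eigenvalues i0 := by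
    have h2 := sMin_le_sqrt_eig B i0
    have h3 : (sMin B)^2 ≤ (Real.sqrt ((Matrix.isHermitian_conjTranspose_mul_self B).eigenvalues i0))^2 := by
      rcases le_or_gt 0 (sMin B) with h | h
      · exact pow_le_pow_left₀ h h2 2
      · exact absurd h (not_lt.mpr (sMin_nonneg B))
    rwa [Real.sq_sqrt (eig_tmul_nonneg B i0)] at h3
  exact mul_le_mul_of_nonneg_right hs (by positivity)

lemma upper_rayleigh [Nonempty (Fin n)] (B : Matrix (Fin m) (Fin n) ℝ) (y : Fin n → ℝ) :
    ∃ i1, ∑ i, (B *ᵥ y) i ^ 2 ≤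
      (Matrix.isHermitian_conjTranspose_mul_self B).eigenvalues i1 * ∑ i, y i ^ 2 := by
  obtain ⟨i1, -, hmax⟩ := Finset.exists_max_image Finset.univ
    (Matrix.isHermitian_conjTranspose_mul_self B).eigenvalues Finset.univ_nonempty
  refine ⟨i1, ?_⟩
  have h1 := quad_le_of_mem_span (Matrix.isHermitian_conjTranspose_mul_self B) Finset.univ
    ((Matrix.isHermitian_conjTranspose_mul_self B).eigenvalues i1)
    (fun i _ => hmax i (Finset.mem_univ i)) (WithLp.toLp 2 y)
    (by rw [span_univ_eigen]; trivial)
  rwa [dot_self_tmul] at h1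

lemma sMin_pos [Nonempty (Fin n)] (B : Matrix (Fin m) (Fin n) ℝ)
    (hker : ∀ y : Fin n → ℝ, B *ᵥ y = 0 → y = 0) : 0 < sMin B := by
  have heig : ∀ i, 0 < (Matrix.isHermitian_conjTranspose_mul_self B).eigenvalues i := by
    intro i
    rcases lt_or_eq_of_le (eig_tmul_nonneg B i) with h | h
    · exact h
    exfalso
    have hq := quad_eigvec (Matrix.isHermitian_conjTranspose_mul_self B) i
    rw [dot_self_tmul, ← h] at hq
    have hz : B *ᵥ ((Matrix.isHermitian_conjTranspose_mul_self B).eigenvectorBasis i : Fin n → ℝ) = 0 := by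
      funext l
      have := (Finset.sum_eq_zero_iff_of_nonneg (fun l _ => sq_nonneg _)).mp hq l (Finset.mem_univ l)
      simpa using pow_eq_zero_iff (two_ne_zero) |>.mp this
    have := hker _ hz
    exact (Matrix.isHermitian_conjTranspose_mul_self B).eigenvectorBasis.orthonormal.ne_zero i
      (by ext l; exact congrFun this l)
  have hsvalpos : ∀ k, 0 < sval B k := by
    intro k
    exact Real.sqrt_pos.mpr (heig _)
  obtain ⟨k0, -, hk0⟩ := Finset.exists_min_image Finset.univ (sval B) Finset.univ_nonempty
  have : sval B k0 ≤ sMin B := le_ciInf fun k => hk0 k (Finset.mem_univ k)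
  exact lt_of_lt_of_le (hsvalpos k0) this




lemma vecNorm_nonneg (v : Fin m → ℝ) : 0 ≤ vecNorm v := Real.sqrt_nonneg _

lemma vecNorm_sq (v : Fin m → ℝ) : (vecNorm v)^2 = ∑ i, v i ^ 2 := by
  rw [vecNorm, Real.sq_sqrt (by positivity)]

lemma ker_triv_of_rank {A : Matrix (Fin m) (Fin n) ℝ} (h : A.rank = n) :
    ∀ y : Fin n → ℝ, A *ᵥ y = 0 → y = 0 := by
  intro y hy
  have hrk : Module.finrank ℝ (LinearMap.range A.mulVecLin) = n := h
  have hadd := LinearMap.finrank_range_add_finrank_ker A.mulVecLin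
  rw [hrk] at hadd
  have : Module.finrank ℝ (Fin n → ℝ) = n := by simp
  rw [this] at hadd
  have hker0 : Module.finrank ℝ (LinearMap.ker A.mulVecLin) = 0 := by omega
  have hbot : LinearMap.ker A.mulVecLin = ⊥ := Submodule.finrank_eq_zero.mp hker0
  have hmem : y ∈ LinearMap.ker A.mulVecLin := by
    rw [LinearMap.mem_ker, Matrix.mulVecLin_apply, hy]
  rw [hbot] at hmem
  simpa using hmem

lemma col_norm_pos {A : Matrix (Fin m) (Fin n) ℝ}
    (hker : ∀ y : Fin n → ℝ, A *ᵥ y = 0 → y = 0) (j : Fin n) :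
    0 < vecNorm (fun i => A i j) := by
  rcases lt_or_eq_of_le (vecNorm_nonneg (fun i => A i j)) with h | h
  · exact h
  exfalso
  have hz : ∀ i, A i j = 0 := by
    intro i
    have h2 : (vecNorm (fun i => A i j))^2 = 0 := by rw [← h]; ring
    rw [vecNorm_sq] at h2
    have := (Finset.sum_eq_zero_iff_of_nonneg (fun l _ => sq_nonneg _)).mp h2 i (Finset.mem_univ i)
    exact pow_eq_zero_iff (two_ne_zero) |>.mp this
  have : A *ᵥ Pi.single j 1 = 0 := by
    rw [Matrix.mulVec_single]
    funext i
    simp [hz i]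
  have h1 := hker _ this
  have := congrFun h1 j
  simp at this

lemma AD_mulVec (A : Matrix (Fin m) (Fin n) ℝ) (y : Fin n → ℝ) :
    (A * colScale A) *ᵥ y = A *ᵥ (fun j => (vecNorm (fun i => A i j))⁻¹ * y j) := by
  have hd : (colScale A) *ᵥ y = fun j => (vecNorm (fun i => A i j))⁻¹ * y j := by
    funext j; rw [colScale, Matrix.mulVec_diagonal]
  rw [← Matrix.mulVec_mulVec, hd]

lemma frob_bound (C : Matrix (Fin m) (Fin n) ℝ) (c : ℝ)
    (hc : ∀ j, ∑ i, (C i j)^2 ≤ c) (z : Fin n → ℝ) :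
    ∑ i, ((C *ᵥ z) i)^2 ≤ (n * c) * ∑ j, z j ^ 2 := by
  have hstep : ∀ i, ((C *ᵥ z) i)^2 ≤ (∑ j, (C i j)^2) * ∑ j, z j ^ 2 := by
    intro i
    have h0 : (C *ᵥ z) i = ∑ j, C i j * z j := rfl
    rw [h0]
    exact Finset.sum_mul_sq_le_sq_mul_sq Finset.univ (fun j => C i j) (fun j => z j)
  calc ∑ i, ((C *ᵥ z) i)^2 ≤ ∑ i, (∑ j, (C i j)^2) * ∑ j, z j ^ 2 :=
        Finset.sum_le_sum fun i _ => hstep i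
    _ = (∑ i, ∑ j, (C i j)^2) * ∑ j, z j ^ 2 := by rw [Finset.sum_mul]
    _ = (∑ j, ∑ i, (C i j)^2) * ∑ j, z j ^ 2 := by rw [Finset.sum_comm]
    _ ≤ (n * c) * ∑ j, z j ^ 2 := by
        refine mul_le_mul_of_nonneg_right ?_ (by positivity)
        calc ∑ j : Fin n, ∑ i, (C i j)^2 ≤ ∑ j : Fin n, c := Finset.sum_le_sum fun j _ => hc j
          _ = n * c := by simp [mul_comm]

lemma vecNorm_eq_norm (v : Fin m → ℝ) :
    vecNorm v = ‖(WithLp.equiv 2 (Fin m → ℝ)).symm v‖ := by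
  rw [EuclideanSpace.norm_eq, vecNorm]
  congr 1
  refine Finset.sum_congr rfl fun i _ => ?_
  show v i ^ 2 = ‖v i‖ ^ 2
  rw [Real.norm_eq_abs, sq_abs]

lemma vecNorm_add_le (u v : Fin m → ℝ) : vecNorm (u + v) ≤ vecNorm u + vecNorm v := by
  rw [vecNorm_eq_norm, vecNorm_eq_norm, vecNorm_eq_norm, WithLp.equiv_symm_apply, WithLp.toLp_add]
  exact norm_add_le _ _

lemma vecNorm_neg (v : Fin m → ℝ) : vecNorm (-v) = vecNorm v := by
  simp [vecNorm]

lemma mul_colScale_mulVec (B A : Matrix (Fin m) (Fin n) ℝ) (y : Fin n → ℝ) :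
    (B * colScale A) *ᵥ y = B *ᵥ (fun j => (vecNorm (fun i => A i j))⁻¹ * y j) := by
  have hd : (colScale A) *ᵥ y = fun j => (vecNorm (fun i => A i j))⁻¹ * y j := by
    funext j; rw [colScale, Matrix.mulVec_diagonal]
  rw [← Matrix.mulVec_mulVec, hd]

lemma specNorm_AD_ge_one [Nonempty (Fin n)] (A : Matrix (Fin m) (Fin n) ℝ)
    (hker : ∀ y : Fin n → ℝ, A *ᵥ y = 0 → y = 0) :
    1 ≤ specNorm (A * colScale A) := by
  set j : Fin n := Classical.arbitrary (Fin n)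
  set y : Fin n → ℝ := Pi.single j 1 with hy
  have hcol := col_norm_pos hker j
  have hys : ∑ l, y l ^ 2 = 1 := by
    rw [hy]
    rw [Finset.sum_eq_single j]
    · simp
    · intro l _ hl; simp [Pi.single_apply, hl]
    · intro h; exact absurd (Finset.mem_univ j) h
  have hADy : (A * colScale A) *ᵥ y = fun i => A i j * (vecNorm (fun i => A i j))⁻¹ := by
    rw [mul_colScale_mulVec]
    have : (fun l => (vecNorm (fun i => A i l))⁻¹ * y l) = Pi.single j ((vecNorm (fun i => A i j))⁻¹) := by
      funext l
      rw [hy]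
      by_cases hl : l = j
      · subst hl; simp
      · simp [Pi.single_apply, hl]
    rw [this, Matrix.mulVec_single]
    rfl
  have hone : ∑ i, ((A * colScale A) *ᵥ y) i ^ 2 = 1 := by
    rw [hADy]
    have : ∑ i, (A i j * (vecNorm (fun i => A i j))⁻¹)^2
        = (∑ i, (A i j)^2) * ((vecNorm (fun i => A i j))⁻¹)^2 := by
      rw [Finset.sum_mul]
      exact Finset.sum_congr rfl fun i _ => by ring
    rw [this, ← vecNorm_sq]
    field_simp
  obtain ⟨i1, hi1⟩ := upper_rayleigh (A * colScale A) y
  rw [hone, hys, mul_one] at hi1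
  obtain ⟨k, hk⟩ := sval_exists_index (A * colScale A) i1
  calc (1:ℝ) = Real.sqrt 1 := by simp
    _ ≤ Real.sqrt ((Matrix.isHermitian_conjTranspose_mul_self (A * colScale A)).eigenvalues i1) :=
        Real.sqrt_le_sqrt hi1
    _ = sval (A * colScale A) k := hk.symm
    _ ≤ specNorm (A * colScale A) := specNorm_ge _ k

lemma AD_ker [Nonempty (Fin n)] (A : Matrix (Fin m) (Fin n) ℝ)
    (hker : ∀ y : Fin n → ℝ, A *ᵥ y = 0 → y = 0) :
    ∀ y : Fin n → ℝ, (A * colScale A) *ᵥ y = 0 → y = 0 := by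
  intro y hy
  rw [mul_colScale_mulVec] at hy
  have h2 := hker _ hy
  funext j
  have := congrFun h2 j
  simp only [Pi.zero_apply] at this ⊢
  have hpos := col_norm_pos hker j
  have hne : (vecNorm (fun i => A i j))⁻¹ ≠ 0 := inv_ne_zero (ne_of_gt hpos)
  exact (mul_eq_zero.mp this).resolve_left hne

lemma key_sq_bound [Nonempty (Fin n)] (A ΔA : Matrix (Fin m) (Fin n) ℝ) (γ : ℝ) (hγ : 0 ≤ γ)
    (hker : ∀ y : Fin n → ℝ, A *ᵥ y = 0 → y = 0)
    (hcols : ∀ j, vecNorm (fun i => ΔA i j) ≤ γ * vecNorm (fun i => A i j))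
    (x : Fin n → ℝ) :
    ∑ i, (ΔA *ᵥ x) i ^ 2 ≤
      ((n * γ^2) / (sMin (A * colScale A))^2) * ∑ i, (A *ᵥ x) i ^ 2 := by
  set y : Fin n → ℝ := fun j => vecNorm (fun i => A i j) * x j with hy
  have hinv : (fun j => (vecNorm (fun i => A i j))⁻¹ * y j) = x := by
    funext j
    rw [hy]
    field_simp [ne_of_gt (col_norm_pos hker j)]
  have h1 : (ΔA * colScale A) *ᵥ y = ΔA *ᵥ x := by rw [mul_colScale_mulVec, hinv]
  have h1' : (A * colScale A) *ᵥ y = A *ᵥ x := by rw [mul_colScale_mulVec, hinv]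
  have hcolsq : ∀ j, ∑ i, ((ΔA * colScale A) i j)^2 ≤ γ^2 := by
    intro j
    have hentry : ∀ i, (ΔA * colScale A) i j = ΔA i j * (vecNorm (fun i => A i j))⁻¹ := by
      intro i
      rw [colScale, Matrix.mul_diagonal]
    have : ∑ i, ((ΔA * colScale A) i j)^2
        = (∑ i, (ΔA i j)^2) * ((vecNorm (fun i => A i j))⁻¹)^2 := by
      rw [Finset.sum_mul]
      exact Finset.sum_congr rfl fun i _ => by rw [hentry i]; ring
    rw [this, ← vecNorm_sq]
    have hpos := col_norm_pos hker j
    have hsq : (vecNorm (fun i => ΔA i j))^2 ≤ γ^2 * (vecNorm (fun i => A i j))^2 := by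
      have := hcols j
      calc (vecNorm (fun i => ΔA i j))^2 ≤ (γ * vecNorm (fun i => A i j))^2 :=
            pow_le_pow_left₀ (vecNorm_nonneg _) this 2
        _ = γ^2 * (vecNorm (fun i => A i j))^2 := by ring
    calc (vecNorm fun i => ΔA i j)^2 * ((vecNorm fun i => A i j)⁻¹)^2
        ≤ (γ^2 * (vecNorm fun i => A i j)^2) * ((vecNorm fun i => A i j)⁻¹)^2 :=
          mul_le_mul_of_nonneg_right hsq (by positivity)
      _ = γ^2 := by field_simp
  have h2 : ∑ i, (ΔA *ᵥ x) i ^ 2 ≤ (n * γ^2) * ∑ j, y j ^2 := by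
    rw [← h1]
    exact frob_bound _ _ hcolsq y
  have hsmin := sMin_pos (A * colScale A) (AD_ker A hker)
  have h3 : (sMin (A * colScale A))^2 * ∑ j, y j ^ 2 ≤ ∑ i, (A *ᵥ x) i ^ 2 := by
    rw [← h1']
    exact lower_rayleigh (A * colScale A) y
  have hy2 : ∑ j, y j ^ 2 ≤ (∑ i, (A *ᵥ x) i ^ 2) / (sMin (A * colScale A))^2 := by
    rw [le_div_iff₀ (by positivity)]
    calc (∑ j, y j ^2) * (sMin (A * colScale A))^2
        = (sMin (A * colScale A))^2 * ∑ j, y j ^ 2 := by ring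
      _ ≤ _ := h3
  calc ∑ i, (ΔA *ᵥ x) i ^ 2 ≤ (n * γ^2) * ∑ j, y j ^2 := h2
    _ ≤ (n * γ^2) * ((∑ i, (A *ᵥ x) i ^ 2) / (sMin (A * colScale A))^2) :=
        mul_le_mul_of_nonneg_left hy2 (by positivity)
    _ = ((n * γ^2) / (sMin (A * colScale A))^2) * ∑ i, (A *ᵥ x) i ^ 2 := by ring

lemma eigs_congr {M N : Matrix (Fin n) (Fin n) ℝ} (h : M = N)
    (hM : M.IsHermitian) (hN : N.IsHermitian) : hM.eigenvalues = hN.eigenvalues := by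
  subst h; rfl

lemma sval_congr {B C : Matrix (Fin m) (Fin n) ℝ} (h : Bᴴ * B = Cᴴ * C) :
    sval B = sval C := by
  funext k
  rw [sval, sval,
    eigs_congr h (Matrix.isHermitian_conjTranspose_mul_self B) (Matrix.isHermitian_conjTranspose_mul_self C)]


end Aux

/-- Singular value perturbation under a backward-stable QR factorization
(part of Proposition 4.1 / equation (4.3)). -/
theorem qr_singular_value_perturbation
    {m n : ℕ} (hmn : n ≤ m)
    (A : Matrix (Fin m) (Fin n) ℝ) (hrank : A.rank = n)
    (γ : ℝ) (hγ : 0 ≤ γ)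
    (ΔA : Matrix (Fin m) (Fin n) ℝ)
    (Q : Matrix (Fin m) (Fin m) ℝ) (R : Matrix (Fin m) (Fin n) ℝ)
    (hQ : Qᵀ * Q = 1)
    (hfact : A + ΔA = Q * R)
    (hcols : ∀ j, vecNorm (fun i => ΔA i j) ≤ γ * vecNorm (fun i => A i j)) :
    ∀ k : Fin n, |sval A k - sval R k| ≤
      Real.sqrt n * γ * scaledCond A * sval A k := by

  intro k
  haveI : Nonempty (Fin n) := ⟨k⟩
  have hker := ker_triv_of_rank hrank
  have hQt : Qᴴ = Qᵀ := by ext i j; simp [Matrix.conjTranspose_apply]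
  have hRR : (A + ΔA)ᴴ * (A + ΔA) = Rᴴ * R := by
    rw [hfact, Matrix.conjTranspose_mul, Matrix.mul_assoc, ← Matrix.mul_assoc Qᴴ Q R,
      hQt, hQ, Matrix.one_mul]
  have hR : sval R k = sval (A + ΔA) k := by rw [← sval_congr hRR]
  set s := sMin (A * colScale A) with hsdef
  have hs : 0 < s := sMin_pos _ (AD_ker A hker)
  set ε := Real.sqrt n * γ * scaledCond A with hε
  have hsmax : 1 ≤ specNorm (A * colScale A) := specNorm_AD_ge_one A hker
  have hεge : Real.sqrt n * γ / s ≤ ε := by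
    rw [hε, scaledCond, kappa2, ← hsdef]
    have h1 : 1 / s ≤ specNorm (A * colScale A) / s := (div_le_div_iff_of_pos_right hs).mpr hsmax
    calc Real.sqrt n * γ / s = Real.sqrt n * γ * (1 / s) := by ring
      _ ≤ Real.sqrt n * γ * (specNorm (A * colScale A) / s) :=
          mul_le_mul_of_nonneg_left h1 (by positivity)
  have hε0 : 0 ≤ ε := le_trans (by positivity) hεge
  have key : ∀ x, vecNorm (ΔA *ᵥ x) ≤ ε * vecNorm (A *ᵥ x) := by
    intro x
    have h := key_sq_bound A ΔA γ hγ hker hcols x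
    have hsq : ((n:ℝ) * γ^2)/s^2 = (Real.sqrt n * γ / s)^2 := by
      rw [div_pow, mul_pow, Real.sq_sqrt (Nat.cast_nonneg n)]
    have h2 : vecNorm (ΔA *ᵥ x) ≤ (Real.sqrt n * γ / s) * vecNorm (A *ᵥ x) := by
      rw [vecNorm, vecNorm]
      calc Real.sqrt (∑ i, (ΔA *ᵥ x) i ^ 2)
          ≤ Real.sqrt (((n:ℝ) * γ^2)/s^2 * ∑ i, (A *ᵥ x) i ^ 2) := Real.sqrt_le_sqrt h
        _ = Real.sqrt (((Real.sqrt n * γ / s)^2) * ∑ i, (A *ᵥ x) i ^ 2) := by rw [hsq]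
        _ = (Real.sqrt n * γ / s) * Real.sqrt (∑ i, (A *ᵥ x) i ^ 2) := by
            rw [Real.sqrt_mul (sq_nonneg _), Real.sqrt_sq (by positivity)]
    exact le_trans h2 (mul_le_mul_of_nonneg_right hεge (vecNorm_nonneg _))
  have upper : ∀ x, ∑ i, ((A + ΔA) *ᵥ x) i ^ 2 ≤ (1+ε)^2 * ∑ i, (A *ᵥ x) i ^ 2 := by
    intro x
    have htri : vecNorm ((A + ΔA) *ᵥ x) ≤ (1+ε) * vecNorm (A *ᵥ x) := by
      rw [Matrix.add_mulVec]
      calc vecNorm (A *ᵥ x + ΔA *ᵥ x) ≤ vecNorm (A *ᵥ x) + vecNorm (ΔA *ᵥ x) :=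
            vecNorm_add_le _ _
        _ ≤ (1+ε) * vecNorm (A *ᵥ x) := by
            have := key x
            have := vecNorm_nonneg (A *ᵥ x)
            nlinarith
    have h2 := pow_le_pow_left₀ (vecNorm_nonneg _) htri 2
    rw [vecNorm_sq] at h2
    rw [mul_pow] at h2
    rw [vecNorm_sq] at h2
    exact h2
  have h_up : sval (A + ΔA) k ≤ (1+ε) * sval A k := by
    have := sval_mono A (A + ΔA) ((1+ε)^2) (by positivity) upper k
    rwa [Real.sqrt_sq (by positivity)] at this
  have h_low : (1-ε) * sval A k ≤ sval (A + ΔA) k := by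
    rcases le_or_gt 1 ε with h1 | h1
    · exact le_trans (mul_nonpos_of_nonpos_of_nonneg (by linarith) (sval_nonneg A k))
        (sval_nonneg _ k)
    · have hlow : ∀ x, ∑ i, (A *ᵥ x) i ^ 2 ≤ ((1-ε)⁻¹)^2 * ∑ i, ((A + ΔA) *ᵥ x) i ^ 2 := by
        intro x
        have heq : A *ᵥ x = (A + ΔA) *ᵥ x + (-(ΔA *ᵥ x)) := by
          rw [Matrix.add_mulVec]; funext i; simp
        have htri : vecNorm (A *ᵥ x) ≤ vecNorm ((A + ΔA) *ᵥ x) + ε * vecNorm (A *ᵥ x) := by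
          calc vecNorm (A *ᵥ x) = vecNorm ((A + ΔA) *ᵥ x + (-(ΔA *ᵥ x))) := by rw [← heq]
            _ ≤ vecNorm ((A + ΔA) *ᵥ x) + vecNorm (-(ΔA *ᵥ x)) := vecNorm_add_le _ _
            _ = vecNorm ((A + ΔA) *ᵥ x) + vecNorm (ΔA *ᵥ x) := by rw [vecNorm_neg]
            _ ≤ vecNorm ((A + ΔA) *ᵥ x) + ε * vecNorm (A *ᵥ x) := by linarith [key x]
        have h2 : (1-ε) * vecNorm (A *ᵥ x) ≤ vecNorm ((A + ΔA) *ᵥ x) := by linarith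
        have h3 := pow_le_pow_left₀
          (mul_nonneg (by linarith) (vecNorm_nonneg _)) h2 2
        rw [mul_pow, vecNorm_sq, vecNorm_sq] at h3
        have h4 : (0:ℝ) < (1-ε)^2 := pow_pos (by linarith) 2
        have h5 : ((1-ε)^2)⁻¹ * ∑ i, ((A + ΔA) *ᵥ x) i ^ 2
            = (∑ i, ((A + ΔA) *ᵥ x) i ^ 2) / (1-ε)^2 := by ring
        rw [inv_pow, h5, le_div_iff₀ h4, mul_comm]
        exact h3
      have := sval_mono (A + ΔA) A (((1-ε)⁻¹)^2) (by positivity) hlow k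
      rw [Real.sqrt_sq (inv_nonneg.mpr (by linarith))] at this
      calc (1-ε) * sval A k ≤ (1-ε) * ((1-ε)⁻¹ * sval (A + ΔA) k) :=
            mul_le_mul_of_nonneg_left this (by linarith)
        _ = sval (A + ΔA) k := by
            rw [← mul_assoc, mul_inv_cancel₀ (by linarith : (1:ℝ)-ε ≠ 0), one_mul]
  rw [hR, abs_sub_le_iff]
  constructor
  · have : sval A k - sval (A + ΔA) k ≤ ε * sval A k := by linarith
    calc sval A k - sval (A + ΔA) k ≤ ε * sval A k := this
      _ = Real.sqrt n * γ * scaledCond A * sval A k := by rw [hε]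
  · have : sval (A + ΔA) k - sval A k ≤ ε * sval A k := by linarith
    calc sval (A + ΔA) k - sval A k ≤ ε * sval A k := this
      _ = Real.sqrt n * γ * scaledCond A * sval A k := by rw [hε]
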